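/- Let {f_α : α < κ} ⊆ ω^ω be strictly increasing functions forming a scale (i.e., ≤*-increasing and dominating). Let X ⊆ P(ω) be the set of their ranges. Then X is not a λ'-set: for every open U ⊆ P(ω) containing all finite subsets of ω, the range of f_α belongs to U for all but fewer than cofinally many α; in particular no G_δ set G satisfies G ∩ (X ∪ [ω]^{<ω}) = [ω]^{<ω}. -/

import Mathlib

open Filter Set

/-- The set of characteristic functions of finite subsets of ω. -/
def FinSets : Set (ℕ → Bool) := {x | {n | x n = true}.Finite}

private lemma coord_open (i : ℕ) : IsOpen {x : ℕ → Bool | x i = true} := by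
  have : {x : ℕ → Bool | x i = true} = (fun x : ℕ → Bool => x i) ⁻¹' {true} := by
    ext x; simp
  rw [this]
  exact (continuous_apply (A := fun _ : ℕ => Bool) i).isOpen_preimage ({true} : Set Bool) (isOpen_discrete _)

private lemma lower_mem {J : Finset ℕ} {n : ℕ}
    (hlow : ∀ j ∈ J, ∀ i ≤ j, i ∈ J) (hcard : n + 1 ≤ J.card) : n ∈ J := by
  by_contra hn
  have hsub : J ⊆ Finset.range n := by
    intro j hj
    simp only [Finset.mem_range]
    by_contra h
    exact hn (hlow j hj n (Nat.le_of_not_lt h))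
  have := Finset.card_le_card hsub
  simp [Finset.card_range] at this
  omega

theorem scale_ranges_not_lambda_prime
    {ι : Type*} [LinearOrder ι]
    (f : ι → (ℕ → ℕ))
    (hsm : ∀ a : ι, StrictMono (f a))
    (hinc : ∀ a b : ι, a < b → ∀ᶠ n in atTop, f a n < f b n)
    (hdom : ∀ g : ℕ → ℕ, ∃ a : ι, ∀ᶠ n in atTop, g n ≤ f a n)
    (X : Set (ℕ → Bool))
    (hX : X = {x | ∃ a : ι, ∀ n, x n = true ↔ n ∈ Set.range (f a)}) :
    (∀ U : Set (ℕ → Bool), IsOpen U → FinSets ⊆ U →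
      ∃ a₀ : ι, ∀ a : ι, a₀ < a →
        ∀ x : ℕ → Bool, (∀ n, x n = true ↔ n ∈ Set.range (f a)) → x ∈ U) ∧
    ¬ ∃ G : Set (ℕ → Bool), IsGδ G ∧ G ∩ (X ∪ FinSets) = FinSets := by
  classical
  have main : ∀ U : Set (ℕ → Bool), IsOpen U → FinSets ⊆ U →
      ∃ a₀ : ι, ∀ a : ι, a₀ < a →
        ∀ x : ℕ → Bool, (∀ n, x n = true ↔ n ∈ Set.range (f a)) → x ∈ U := by
    intro U hU hFU
    set K : Set (ℕ → Bool) := Uᶜ with hK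
    have hKcomp : IsCompact K := (hU.isClosed_compl).isCompact
    -- for each n, find a bound g n
    have hg : ∀ n : ℕ, ∃ m : ℕ, ∀ x ∈ K,
        n + 1 ≤ ((Finset.range m).filter (fun i => x i = true)).card := by
      intro n
      set V : ℕ → Set (ℕ → Bool) :=
        fun m => {x | n + 1 ≤ ((Finset.range m).filter (fun i => x i = true)).card} with hV
      have hVopen : ∀ m, IsOpen (V m) := by
        intro m
        have hVeq : V m = ⋃ S ∈ {S : Finset ℕ | S ⊆ Finset.range m ∧ n + 1 ≤ S.card},
            ⋂ i ∈ S, {x : ℕ → Bool | x i = true} := by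
          ext x
          simp only [hV, Set.mem_setOf_eq, Set.mem_iUnion, Set.mem_iInter]
          constructor
          · intro hx
            exact ⟨(Finset.range m).filter (fun i => x i = true),
              ⟨Finset.filter_subset _ _, hx⟩,
              fun i hi => (Finset.mem_filter.mp hi).2⟩
          · rintro ⟨S, ⟨hS1, hS2⟩, hS3⟩
            have : S ⊆ (Finset.range m).filter (fun i => x i = true) := fun i hi =>
              Finset.mem_filter.mpr ⟨hS1 hi, hS3 i hi⟩
            have := Finset.card_le_card this
            omega
        rw [hVeq]
        apply isOpen_biUnion
        intro S _
        exact isOpen_biInter_finset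
          (f := fun i : ℕ => {x : ℕ → Bool | x i = true})
          (fun i _ => coord_open i)
      have hcover : K ⊆ ⋃ m, V m := by
        intro x hx
        have hinf : {i | x i = true}.Infinite := by
          intro hfin
          exact hx (hFU hfin)
        obtain ⟨t, hts, htc⟩ := hinf.exists_subset_card_eq (n + 1)
        refine mem_iUnion.mpr ⟨t.sup id + 1, ?_⟩
        have htsub : t ⊆ (Finset.range (t.sup id + 1)).filter (fun i => x i = true) := by
          intro j hj
          refine Finset.mem_filter.mpr ⟨Finset.mem_range.mpr ?_, hts hj⟩
          exact Nat.lt_succ_of_le (Finset.le_sup (f := id) hj)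
        have := Finset.card_le_card htsub
        simp only [hV, Set.mem_setOf_eq]
        omega
      obtain ⟨t, ht⟩ := hKcomp.elim_finite_subcover V hVopen hcover
      refine ⟨t.sup id + 1, ?_⟩
      intro x hx
      obtain ⟨m, hm, hxm⟩ := Set.mem_iUnion₂.mp (ht hx)
      have hmono : ((Finset.range m).filter (fun i => x i = true)).card ≤
          ((Finset.range (t.sup id + 1)).filter (fun i => x i = true)).card := by
        apply Finset.card_le_card
        apply Finset.filter_subset_filter
        apply Finset.range_subset_range.mpr
        exact Nat.le_succ_of_le (Finset.le_sup (f := id) hm)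
      exact le_trans hxm hmono
    choose g hgK using hg
    obtain ⟨a₀, ha₀⟩ := hdom g
    refine ⟨a₀, fun a ha x hxa => ?_⟩
    by_contra hxU
    have hxK : x ∈ K := hxU
    obtain ⟨n, hn1, hn2⟩ := ((ha₀.and (hinc a₀ a ha)).exists)
    -- n+1 ≤ card of trues below g n
    have hcard := hgK n x hxK
    set J : Finset ℕ := (Finset.range (g n)).filter (fun j => f a j < g n) with hJ
    have hTJ : (Finset.range (g n)).filter (fun i => x i = true) ⊆ Finset.image (f a) J := by
      intro t ht
      obtain ⟨ht1, ht2⟩ := Finset.mem_filter.mp ht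
      obtain ⟨j, hj⟩ := (hxa t).mp ht2
      have htlt : t < g n := Finset.mem_range.mp ht1
      refine Finset.mem_image.mpr ⟨j, ?_, hj⟩
      refine Finset.mem_filter.mpr ⟨Finset.mem_range.mpr ?_, by rw [hj]; exact htlt⟩
      calc j ≤ f a j := (hsm a).le_apply
        _ = t := hj
        _ < g n := htlt
    have hcardJ : n + 1 ≤ J.card := by
      calc n + 1 ≤ ((Finset.range (g n)).filter (fun i => x i = true)).card := hcard
        _ ≤ (Finset.image (f a) J).card := Finset.card_le_card hTJ
        _ ≤ J.card := Finset.card_image_le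
    have hnJ : n ∈ J := by
      apply lower_mem _ hcardJ
      intro j hj i hij
      obtain ⟨hj1, hj2⟩ := Finset.mem_filter.mp hj
      have : f a i ≤ f a j := (hsm a).monotone hij
      refine Finset.mem_filter.mpr ⟨Finset.mem_range.mpr ?_, by omega⟩
      have := Finset.mem_range.mp hj1
      omega
    have : f a n < g n := (Finset.mem_filter.mp hnJ).2
    omega
  refine ⟨main, ?_⟩
  rintro ⟨G, hGδ, hGeq⟩
  obtain ⟨Us, hUsopen, hGU⟩ := hGδ.eq_iInter_nat
  have hFG : FinSets ⊆ G := by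
    intro x hx
    have : x ∈ G ∩ (X ∪ FinSets) := by rw [hGeq]; exact hx
    exact this.1
  have hFUi : ∀ i, FinSets ⊆ Us i := fun i =>
    hFG.trans (by rw [hGU]; exact Set.iInter_subset Us i)
  choose a₀ ha₀ using fun i => main (Us i) (hUsopen i) (hFUi i)
  -- find b above all a₀ i
  set g' : ℕ → ℕ := fun n => (Finset.range (n + 1)).sup (fun i => f (a₀ i) n) + 1 with hg'
  obtain ⟨b, hb⟩ := hdom g'
  have hab : ∀ i, a₀ i < b := by
    intro i
    have hev : ∀ᶠ n in atTop, f (a₀ i) n < f b n := by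
      filter_upwards [hb, eventually_ge_atTop i] with n h1 h2
      have hi : i ∈ Finset.range (n + 1) := Finset.mem_range.mpr (by omega)
      have : f (a₀ i) n ≤ (Finset.range (n + 1)).sup (fun j => f (a₀ j) n) :=
        Finset.le_sup (f := fun j => f (a₀ j) n) hi
      simp only [hg'] at h1
      omega
    rcases lt_trichotomy (a₀ i) b with h | h | h
    · exact h
    · obtain ⟨n, hn⟩ := hev.exists; rw [h] at hn; omega
    · obtain ⟨n, hn1, hn2⟩ := ((hinc b (a₀ i) h).and hev).exists; omega
  set x : ℕ → Bool := fun n => if n ∈ Set.range (f b) then true else false with hx'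
  have hxiff : ∀ n, x n = true ↔ n ∈ Set.range (f b) := by
    intro n
    simp only [hx']
    split <;> simp_all
  have hxG : x ∈ G := by
    rw [hGU]
    exact Set.mem_iInter.mpr fun i => ha₀ i b (hab i) x hxiff
  have hxX : x ∈ X := hX ▸ ⟨b, hxiff⟩
  have hxF : x ∈ FinSets := by rw [← hGeq]; exact Set.mem_inter hxG (Or.inl hxX)
  have hfin : {n | x n = true}.Finite := hxF
  have : {n | x n = true} = Set.range (f b) := Set.ext fun n => hxiff n
  rw [this] at hfin
  exact (Set.infinite_range_of_injective (hsm b).injective) hfin
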